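/- Let F ⊆ ℝ be closed and suppose there exists a continuous function f : ℝ → ℝ with 𝕃ip f = χ_F. Then F is quasi-dense: for every x ∈ F and every open neighborhood U of x, ℓ(F ∩ U) > 0. -/

import Mathlib

open scoped Classical
open Filter Metric Topology MeasureTheory Set ENNReal

/-- The local Lipschitz derivative. -/
noncomputable def LLip {X Y : Type*} [MetricSpace X] [MetricSpace Y] (f : X → Y) (x : X) : ℝ≥0∞ :=
  ⨅ (r : ℝ) (_ : 0 < r), ⨆ (u : X) (_ : u ∈ ball x r) (v : X) (_ : v ∈ ball x r) (_ : u ≠ v),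
    ENNReal.ofReal (dist (f u) (f v) / dist u v)

lemma llip_slope {f : ℝ → ℝ} {y c : ℝ} (hc : 0 < c)
    (hlt : LLip f y < ENNReal.ofReal c) :
    ∃ ρ > 0, ∀ p ∈ ball y ρ, ∀ q ∈ ball y ρ, |f p - f q| ≤ c * |p - q| := by
  rw [LLip] at hlt
  simp only [iInf_lt_iff] at hlt
  obtain ⟨ρ, hρ, hS⟩ := hlt
  refine ⟨ρ, hρ, fun p hp q hq => ?_⟩
  rcases eq_or_ne p q with rfl | hne
  · simpa using mul_nonneg hc.le (abs_nonneg (p - p))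
  · have hterm : ENNReal.ofReal (dist (f p) (f q) / dist p q) < ENNReal.ofReal c :=
      by
        refine lt_of_le_of_lt ?_ hS
        apply le_iSup_of_le p
        apply le_iSup_of_le hp
        apply le_iSup_of_le q
        apply le_iSup_of_le hq
        exact le_iSup_of_le hne le_rfl
    have h1 := (ENNReal.ofReal_lt_ofReal_iff hc).mp hterm
    have hd : 0 < dist p q := dist_pos.mpr hne
    rw [div_lt_iff₀ hd] at h1
    calc |f p - f q| = dist (f p) (f q) := (Real.dist_eq _ _).symm
    _ ≤ c * dist p q := h1.le
    _ = c * |p - q| := by rw [Real.dist_eq]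

lemma key_est (f : ℝ → ℝ) (hc : Continuous f) (V : Set ℝ) (hVo : IsOpen V)
    (hVfin : volume V ≠ ⊤) (u v : ℝ) (huv : u ≤ v) (ε : ℝ) (hε : 0 < ε)
    (hout : ∀ t ∈ Icc u v, t ∉ V →
      ∃ ρ > 0, ∀ p ∈ ball t ρ, ∀ q ∈ ball t ρ, |f p - f q| ≤ ε * |p - q|)
    (hall : ∀ t ∈ Icc u v,
      ∃ ρ > 0, ∀ p ∈ ball t ρ, ∀ q ∈ ball t ρ, |f p - f q| ≤ (1 + ε) * |p - q|) :
    |f v - f u| ≤ ε * (v - u) + (1 + ε) * (volume (V ∩ Icc u v)).toReal := by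
  set m : ℝ → ℝ := fun t => (volume (V ∩ Icc u t)).toReal with hm
  have fin : ∀ t, volume (V ∩ Icc u t) ≠ ⊤ :=
    fun t => ne_top_of_le_ne_top hVfin (measure_mono inter_subset_left)
  have mono : ∀ ⦃s t : ℝ⦄, s ≤ t → m s ≤ m t := by
    intro s t hst
    exact ENNReal.toReal_mono (fin t)
      (measure_mono (inter_subset_inter_right _ (Icc_subset_Icc_right hst)))
  have lip : ∀ s t : ℝ, s ≤ t → m t ≤ m s + (t - s) := by
    intro s t hst
    have hsub : V ∩ Icc u t ⊆ (V ∩ Icc u s) ∪ Icc s t := by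
      rintro x ⟨hxV, hxu, hxt⟩
      by_cases hxs : x ≤ s
      · exact Or.inl ⟨hxV, hxu, hxs⟩
      · exact Or.inr ⟨le_of_not_ge hxs, hxt⟩
    calc m t ≤ (volume (V ∩ Icc u s) + volume (Icc s t)).toReal := by
          refine ENNReal.toReal_mono ?_ (le_trans (measure_mono hsub) (measure_union_le _ _))
          exact ENNReal.add_ne_top.mpr ⟨fin s, by simp [Real.volume_Icc]⟩
    _ = m s + (t - s) := by
          rw [ENNReal.toReal_add (fin s) (by simp [Real.volume_Icc]), Real.volume_Icc,
            ENNReal.toReal_ofReal (sub_nonneg.mpr hst)]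
  have contm : Continuous m := by
    have key2 : ∀ s t : ℝ, s ≤ t → |m t - m s| ≤ t - s := by
      intro s t hst
      rw [abs_of_nonneg (sub_nonneg.mpr (mono hst))]
      linarith [lip s t hst]
    refine (LipschitzWith.of_dist_le_mul (K := 1) (f := m) ?_).continuous
    intro s t
    rw [Real.dist_eq, Real.dist_eq, NNReal.coe_one, one_mul]
    rcases le_total s t with hst | hst
    · rw [abs_sub_comm (m s) (m t), abs_sub_comm s t]
      exact (key2 s t hst).trans (le_abs_self _)
    · exact (key2 t s hst).trans (le_abs_self _)
  have super : ∀ c t : ℝ, u ≤ c → c ≤ t → Ioc c t ⊆ V → m c + (t - c) ≤ m t := by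
    intro c t huc hct hV
    have hdisj : Disjoint (V ∩ Icc u c) (Ioc c t) := by
      rw [Set.disjoint_left]
      rintro x ⟨_, _, hxc⟩ ⟨hcx, _⟩
      exact absurd hxc (not_le.mpr hcx)
    have hsub : (V ∩ Icc u c) ∪ Ioc c t ⊆ V ∩ Icc u t := by
      rintro x (⟨hxV, hxu, hxc⟩ | hx)
      · exact ⟨hxV, hxu, hxc.trans hct⟩
      · exact ⟨hV hx, huc.trans hx.1.le, hx.2⟩
    have hun : volume (V ∩ Icc u c) + volume (Ioc c t) ≤ volume (V ∩ Icc u t) := by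
      rw [← measure_union hdisj measurableSet_Ioc]
      exact measure_mono hsub
    have := ENNReal.toReal_mono (fin t) hun
    rwa [ENNReal.toReal_add (fin c) (by simp [Real.volume_Ioc]), Real.volume_Ioc,
      ENNReal.toReal_ofReal (sub_nonneg.mpr hct)] at this
  set S := {t : ℝ | t ∈ Icc u v ∧ |f t - f u| ≤ ε * (t - u) + (1 + ε) * m t} with hS
  have huS : u ∈ S := by
    refine ⟨⟨le_rfl, huv⟩, ?_⟩
    simp only [sub_self, abs_zero, mul_zero, zero_add]
    exact mul_nonneg (by linarith) ENNReal.toReal_nonneg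
  have hbdd : BddAbove S := ⟨v, fun t ht => ht.1.2⟩
  have hclosed : IsClosed S := by
    have : S = Icc u v ∩ {t : ℝ | |f t - f u| ≤ ε * (t - u) + (1 + ε) * m t} := by
      ext t; exact Iff.rfl
    rw [this]
    refine isClosed_Icc.inter (isClosed_le ?_ ?_)
    · exact (hc.sub continuous_const).abs
    · exact ((continuous_const.mul (continuous_id.sub continuous_const)).add
        (continuous_const.mul contm))
  set c := sSup S with hcdef
  have hcS : c ∈ S := hclosed.csSup_mem ⟨u, huS⟩ hbdd
  have hcv : c ≤ v := csSup_le ⟨u, huS⟩ fun t ht => ht.1.2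
  have hcmain : c = v := by
    by_contra hne
    have hclt : c < v := lt_of_le_of_ne hcv hne
    by_cases hcV : c ∈ V
    · obtain ⟨ρ₁, hρ₁, hball⟩ := Metric.isOpen_iff.mp hVo c hcV
      obtain ⟨ρ₂, hρ₂, hsl⟩ := hall c hcS.1
      set ρ := min ρ₁ ρ₂ with hρdef
      have hρ : 0 < ρ := lt_min hρ₁ hρ₂
      set t := min v (c + ρ / 2) with htdef
      have hct : c < t := lt_min hclt (by linarith)
      have htv : t ≤ v := min_le_left _ _
      have htc : t - c ≤ ρ / 2 := by
        have : t ≤ c + ρ / 2 := min_le_right _ _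
        linarith
      have htball : t ∈ ball c ρ₂ := by
        rw [mem_ball, Real.dist_eq, abs_of_pos (sub_pos.mpr hct)]
        have : ρ ≤ ρ₂ := min_le_right _ _
        linarith
      have hcball : c ∈ ball c ρ₂ := mem_ball_self hρ₂
      have hIoc : Ioc c t ⊆ V := by
        intro s hs
        apply hball
        rw [mem_ball, Real.dist_eq, abs_of_pos (sub_pos.mpr hs.1)]
        have h1 : s - c ≤ t - c := by linarith [hs.2]
        have h2 : ρ ≤ ρ₁ := min_le_left _ _
        linarith
      have hsup := super c t hcS.1.1 hct.le hIoc
      have hslope : |f t - f c| ≤ (1 + ε) * (t - c) := by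
        have := hsl t htball c hcball
        rwa [abs_of_pos (sub_pos.mpr hct)] at this
      have htS : t ∈ S := by
        refine ⟨⟨hcS.1.1.trans hct.le, htv⟩, ?_⟩
        have h1 : |f t - f u| ≤ |f t - f c| + |f c - f u| := abs_sub_le _ _ _
        have h2 := hcS.2
        have h3 : (1 + ε) * (m c + (t - c)) ≤ (1 + ε) * m t :=
          mul_le_mul_of_nonneg_left hsup (by linarith)
        have h4 : u ≤ c := hcS.1.1
        nlinarith
      have := le_csSup hbdd htS
      linarith
    · obtain ⟨ρ, hρ, hsl⟩ := hout c hcS.1 hcV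
      set t := min v (c + ρ / 2) with htdef
      have hct : c < t := lt_min hclt (by linarith)
      have htv : t ≤ v := min_le_left _ _
      have htball : t ∈ ball c ρ := by
        rw [mem_ball, Real.dist_eq, abs_of_pos (sub_pos.mpr hct)]
        have : t ≤ c + ρ / 2 := min_le_right _ _
        linarith
      have hcball : c ∈ ball c ρ := mem_ball_self hρ
      have hslope : |f t - f c| ≤ ε * (t - c) := by
        have := hsl t htball c hcball
        rwa [abs_of_pos (sub_pos.mpr hct)] at this
      have htS : t ∈ S := by
        refine ⟨⟨hcS.1.1.trans hct.le, htv⟩, ?_⟩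
        have h1 : |f t - f u| ≤ |f t - f c| + |f c - f u| := abs_sub_le _ _ _
        have h2 := hcS.2
        have h3 : (1 + ε) * m c ≤ (1 + ε) * m t :=
          mul_le_mul_of_nonneg_left (mono hct.le) (by linarith)
        have h4 : u ≤ c := hcS.1.1
        nlinarith
      have := le_csSup hbdd htS
      linarith
  have := hcS.2
  rw [hcmain] at this
  exact this

theorem qDense_of_LLip_one (F : Set ℝ) (hF : IsClosed F) (f : ℝ → ℝ) (hc : Continuous f)
    (h : ∀ x, LLip f x = (if x ∈ F then 1 else 0)) :
    ∀ x ∈ F, ∀ U : Set ℝ, IsOpen U → x ∈ U → 0 < volume (F ∩ U) := by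
  intro x hxF U hU hxU
  by_contra hpos
  have h0 : volume (F ∩ U) = 0 := le_zero_iff.mp (not_lt.mp hpos)
  obtain ⟨r, hr, hballU⟩ := Metric.isOpen_iff.mp hU x hxU
  have hsubU : ball x (r / 2) ⊆ U :=
    (ball_subset_ball (by linarith)).trans hballU
  -- the key estimate: f is constant on ball x (r/2)
  have main : ∀ p q : ℝ, p ∈ ball x (r / 2) → q ∈ ball x (r / 2) → p ≤ q →
      ∀ η > 0, |f q - f p| ≤ η := by
    intro p q hp hq hpq η hη
    have hIcc : Icc p q ⊆ ball x (r / 2) := by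
      rw [Real.ball_eq_Ioo] at hp hq ⊢
      intro t ht
      exact ⟨lt_of_lt_of_le hp.1 ht.1, lt_of_le_of_lt ht.2 hq.2⟩
    set ε := min 1 (η / (|q - p| + 3)) with hεdef
    have hC : (0:ℝ) < |q - p| + 3 := by positivity
    have hε : 0 < ε := lt_min one_pos (div_pos hη hC)
    have hε1 : ε ≤ 1 := min_le_left _ _
    have hεη : ε ≤ η / (|q - p| + 3) := min_le_right _ _
    have hK0 : volume (F ∩ Icc p q) = 0 :=
      measure_mono_null (inter_subset_inter_right _ (hIcc.trans hsubU)) h0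
    obtain ⟨V, hVsub, hVo, hVm⟩ :=
      Set.exists_isOpen_lt_of_lt (F ∩ Icc p q) (ENNReal.ofReal ε)
        (by rw [hK0]; exact ENNReal.ofReal_pos.mpr hε)
    have hVfin : volume V ≠ ⊤ := (hVm.trans ENNReal.ofReal_lt_top).ne
    have hest := key_est f hc V hVo hVfin p q hpq ε hε
      (by
        intro t ht htV
        have htF : t ∉ F := fun htF => htV (hVsub ⟨htF, ht⟩)
        have hzero : LLip f t = 0 := by rw [h t, if_neg htF]
        exact llip_slope hε (by rw [hzero]; exact ENNReal.ofReal_pos.mpr hε))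
      (by
        intro t _
        refine llip_slope (by linarith) ?_
        rw [h t]
        by_cases htF : t ∈ F
        · rw [if_pos htF, show (1:ℝ≥0∞) = ENNReal.ofReal 1 by simp]
          exact (ENNReal.ofReal_lt_ofReal_iff (by linarith)).mpr (by linarith)
        · rw [if_neg htF]; exact ENNReal.ofReal_pos.mpr (by linarith))
    have hMle : (volume (V ∩ Icc p q)).toReal ≤ ε := by
      have h1 : volume (V ∩ Icc p q) < ENNReal.ofReal ε :=
        lt_of_le_of_lt (measure_mono inter_subset_left) hVm
      exact (ENNReal.toReal_le_of_le_ofReal hε.le h1.le)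
    have hM0 : (0:ℝ) ≤ (volume (V ∩ Icc p q)).toReal := ENNReal.toReal_nonneg
    have habs : q - p = |q - p| := (abs_of_nonneg (sub_nonneg.mpr hpq)).symm
    have hεbound : ε * (|q - p| + 3) ≤ η := by
      rw [← le_div_iff₀ hC] at *
      exact hεη
    nlinarith [hest]
  have hconst : ∀ p ∈ ball x (r / 2), ∀ q ∈ ball x (r / 2), f p = f q := by
    intro p hp q hq
    rcases le_total p q with hle | hle
    · have hle0 : |f q - f p| ≤ 0 := by
        refine le_of_forall_pos_le_add fun η hη => ?_
        simpa using main p q hp hq hle η hη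
      have := abs_nonpos_iff.mp hle0
      linarith [sub_eq_zero.mp this]
    · have hle0 : |f p - f q| ≤ 0 := by
        refine le_of_forall_pos_le_add fun η hη => ?_
        simpa using main q p hq hp hle η hη
      exact sub_eq_zero.mp (abs_nonpos_iff.mp hle0)
  have hzero : LLip f x = 0 := by
    refine le_antisymm ?_ zero_le
    rw [LLip]
    refine le_trans (iInf_le_of_le (r / 2) (iInf_le_of_le (by linarith) le_rfl)) ?_
    refine iSup₂_le fun p hp => iSup₂_le fun q hq => iSup_le fun _ => ?_
    rw [hconst p hp q hq]
    simp
  have hone := h x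
  rw [if_pos hxF, hzero] at hone
  exact one_ne_zero hone.symm
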